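/- Let g be a C¹ function on an annulus {α ≤ |z| ≤ μα} (centered at 0) whose tangential derivative satisfies |∂g/∂s(z)| ≤ 10·∂g/∂r(z) with ∂g/∂r(z) > 0 throughout the annulus. Let r(θ)e^{iθ}, θ ∈ [0, θ₂], be a C¹ parametrization of a level curve {g = c} inside the annulus with r(0) = α. Then r(θ₂) ≤ e^{20π}·α. In particular, if μ > e^{20π} the level curve component cannot reach the outer circle |z| = μα within one full turn. -/

import Mathlib

/-- A level curve `r(θ)e^{iθ}` of a function `g` whose tangential derivative is controlled by
ten times its (positive) radial derivative, starting on the circle `|z| = α`, satisfies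
`r(θ₂) ≤ e^{20π}·α` within one full turn. -/
theorem stmt8 (α μ c θ₂ : ℝ) (hα : 0 < α) (hμ : 1 ≤ μ)
    (hθ₂ : 0 ≤ θ₂) (hθ₂' : θ₂ ≤ 2 * Real.pi)
    (g : ℂ → ℝ)
    (hg : ∀ z : ℂ, α ≤ ‖z‖ → ‖z‖ ≤ μ * α → DifferentiableAt ℝ g z)
    (hderiv : ∀ z : ℂ, α ≤ ‖z‖ → ‖z‖ ≤ μ * α →
      0 < fderiv ℝ g z (z / (‖z‖ : ℂ)) ∧
      |fderiv ℝ g z (Complex.I * z / (‖z‖ : ℂ))| ≤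
        10 * fderiv ℝ g z (z / (‖z‖ : ℂ)))
    (r r' : ℝ → ℝ)
    (hr : ∀ θ ∈ Set.Icc 0 θ₂, HasDerivAt r (r' θ) θ)
    (hr'c : ContinuousOn r' (Set.Icc 0 θ₂))
    (hrange : ∀ θ ∈ Set.Icc 0 θ₂, α ≤ r θ ∧ r θ ≤ μ * α)
    (hlev : ∀ θ ∈ Set.Icc 0 θ₂, g ((r θ : ℂ) * Complex.exp ((θ : ℂ) * Complex.I)) = c)
    (h0 : r 0 = α) :
    r θ₂ ≤ Real.exp (20 * Real.pi) * α := by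
  -- Step 1: r' θ ≤ 10 * r θ on the open interval
  have key : ∀ θ ∈ Set.Ioo (0:ℝ) θ₂, r' θ ≤ 10 * r θ := by
    intro θ hθo
    have hθ : θ ∈ Set.Icc (0:ℝ) θ₂ := Set.mem_Icc_of_Ioo hθo
    set e : ℂ := Complex.exp ((θ : ℂ) * Complex.I) with he
    set z : ℂ := (r θ : ℂ) * e with hz
    have hrθ := hrange θ hθ
    have hrpos : 0 < r θ := lt_of_lt_of_le hα hrθ.1
    have habse : ‖e‖ = 1 := by
      simp [he, Complex.norm_exp]
    have habs : ‖z‖ = r θ := by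
      rw [hz, norm_mul, habse, Complex.norm_real, Real.norm_eq_abs, abs_of_pos hrpos, mul_one]
    have hA := hderiv z (habs ▸ hrθ.1) (habs ▸ hrθ.2)
    have hrC : ((r θ : ℝ) : ℂ) ≠ 0 := by
      exact_mod_cast ne_of_gt hrpos
    have hdiv : z / (‖z‖ : ℂ) = e := by
      rw [habs, hz, mul_comm, mul_div_assoc, div_self hrC, mul_one]
    have hdiv2 : Complex.I * z / (‖z‖ : ℂ) = Complex.I * e := by
      rw [habs, hz]
      field_simp
    rw [hdiv] at hA
    rw [hdiv2] at hA
    -- derivative of the curve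
    have h1 : HasDerivAt (fun t : ℝ => ((r t : ℝ) : ℂ)) (r' θ : ℂ) θ :=
      (hr θ hθ).ofReal_comp
    have h2 : HasDerivAt (fun t : ℝ => Complex.exp ((t : ℂ) * Complex.I))
        (Complex.I * e) θ := by
      have hb : HasDerivAt (fun t : ℝ => (t : ℂ) * Complex.I) Complex.I θ := by
        simpa using (Complex.ofRealCLM.hasDerivAt (x := θ)).mul_const Complex.I
      simpa [he, mul_comm] using hb.cexp
    have hγ : HasDerivAt (fun t : ℝ => ((r t : ℝ) : ℂ) * Complex.exp ((t : ℂ) * Complex.I))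
        ((r' θ : ℂ) * e + (r θ : ℂ) * (Complex.I * e)) θ := by
      exact h1.mul h2
    have hgz : DifferentiableAt ℝ g z := hg z (habs ▸ hrθ.1) (habs ▸ hrθ.2)
    have hcomp : HasDerivAt (fun t : ℝ => g (((r t : ℝ) : ℂ) * Complex.exp ((t : ℂ) * Complex.I)))
        (fderiv ℝ g z ((r' θ : ℂ) * e + (r θ : ℂ) * (Complex.I * e))) θ := by
      have := hgz.hasFDerivAt.comp_hasDerivAt θ hγ
      exact this
    -- the composition is constant near θ
    have hmem : Set.Icc (0:ℝ) θ₂ ∈ nhds θ := Icc_mem_nhds hθo.1 hθo.2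
    have hev : (fun t : ℝ => g (((r t : ℝ) : ℂ) * Complex.exp ((t : ℂ) * Complex.I)))
        =ᶠ[nhds θ] fun _ => c := Filter.eventually_of_mem hmem (fun t ht => hlev t ht)
    have hconst : HasDerivAt (fun t : ℝ => g (((r t : ℝ) : ℂ) * Complex.exp ((t : ℂ) * Complex.I)))
        0 θ := (hasDerivAt_const θ c).congr_of_eventuallyEq hev
    have hzero : fderiv ℝ g z ((r' θ : ℂ) * e + (r θ : ℂ) * (Complex.I * e)) = 0 :=
      hcomp.unique hconst
    -- linearity
    have hlin : fderiv ℝ g z ((r' θ : ℂ) * e + (r θ : ℂ) * (Complex.I * e))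
        = r' θ * fderiv ℝ g z e + r θ * fderiv ℝ g z (Complex.I * e) := by
      have e1 : (r' θ : ℂ) * e = (r' θ) • e := Complex.real_smul.symm
      have e2 : (r θ : ℂ) * (Complex.I * e) = (r θ) • (Complex.I * e) :=
        Complex.real_smul.symm
      rw [e1, e2, map_add, map_smul, map_smul]
      simp
    rw [hlin] at hzero
    set A := fderiv ℝ g z e with hAdef
    set B := fderiv ℝ g z (Complex.I * e) with hBdef
    have hApos : 0 < A := hA.1
    have hBle : -(10 * A) ≤ B := (abs_le.mp hA.2).1
    -- r' θ * A + r θ * B = 0, B ≥ -10A, A > 0, r θ > 0 ⟹ r' θ ≤ 10 r θ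
    nlinarith [mul_le_mul_of_nonneg_left hBle (le_of_lt hrpos)]
  -- Step 2: Gronwall via antitone of r θ * exp(-10 θ)
  have hrc : ContinuousOn r (Set.Icc 0 θ₂) := fun θ hθ => (hr θ hθ).continuousAt.continuousWithinAt
  have hd : ∀ θ ∈ Set.Ioo (0:ℝ) θ₂, HasDerivAt (fun θ => r θ * Real.exp (-10 * θ))
      (r' θ * Real.exp (-10 * θ) + r θ * (Real.exp (-10 * θ) * -10)) θ := by
    intro θ hθo
    have hθ : θ ∈ Set.Icc (0:ℝ) θ₂ := Set.mem_Icc_of_Ioo hθo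
    have he : HasDerivAt (fun θ : ℝ => Real.exp (-10 * θ)) (Real.exp (-10 * θ) * -10) θ := by
      simpa [mul_comm] using ((hasDerivAt_id θ).const_mul (-10:ℝ)).exp
    exact (hr θ hθ).mul he
  have hanti : AntitoneOn (fun θ => r θ * Real.exp (-10 * θ)) (Set.Icc 0 θ₂) := by
    apply antitoneOn_of_deriv_nonpos (convex_Icc 0 θ₂)
    · exact hrc.mul (Real.continuous_exp.comp (continuous_const.mul continuous_id)).continuousOn
    · intro θ hθo
      rw [interior_Icc] at hθo
      exact (hd θ hθo).differentiableAt.differentiableWithinAt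
    · intro θ hθo
      rw [interior_Icc] at hθo
      rw [(hd θ hθo).deriv]
      have hk := key θ hθo
      have hexp : 0 < Real.exp (-10 * θ) := Real.exp_pos _
      have hrpos : 0 < r θ := lt_of_lt_of_le hα (hrange θ (Set.mem_Icc_of_Ioo hθo)).1
      nlinarith
  have h02 : (0:ℝ) ∈ Set.Icc (0:ℝ) θ₂ := ⟨le_refl _, hθ₂⟩
  have hθ2m : θ₂ ∈ Set.Icc (0:ℝ) θ₂ := ⟨hθ₂, le_refl _⟩
  have hle := hanti h02 hθ2m hθ₂
  simp only [mul_zero, Real.exp_zero, mul_one, h0] at hle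
  -- r θ₂ ≤ α * exp(10 θ₂) ≤ exp(20π) * α
  have hexp2 : 0 < Real.exp (-10 * θ₂) := Real.exp_pos _
  have h1 : r θ₂ ≤ α * Real.exp (10 * θ₂) := by
    have := mul_le_mul_of_nonneg_right hle (le_of_lt (Real.exp_pos (10 * θ₂)))
    rwa [mul_assoc, ← Real.exp_add, neg_mul, neg_add_cancel, Real.exp_zero, mul_one] at this
  have h2 : Real.exp (10 * θ₂) ≤ Real.exp (20 * Real.pi) := by
    apply Real.exp_le_exp.mpr; linarith
  calc r θ₂ ≤ α * Real.exp (10 * θ₂) := h1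
    _ ≤ α * Real.exp (20 * Real.pi) := by
        exact mul_le_mul_of_nonneg_left h2 (le_of_lt hα)
    _ = Real.exp (20 * Real.pi) * α := mul_comm _ _
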